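/- Let p be a prime, r > 1, q = p^r, 0 ≤ m ≤ q−1, and m' ≡ m (mod q−1). Write m = ∑_{i=0}^{r−1} m_i p^i and m' = ∑_j m'_j p^j in base p, and set r'_i = ∑_{j ≡ i (mod r)} m'_j. Then the digit sums satisfy f(m') = f(m) if and only if r'_i = m_i for all 0 ≤ i ≤ r−1. -/

import Mathlib

open Finset

lemma sum_getD_range (L : List ℕ) : ∀ {n : ℕ}, L.length ≤ n →
    ∑ j ∈ Finset.range n, L.getD j 0 = L.sum := by
  induction L with
  | nil => intro n _; simp
  | cons d t ih =>
    intro n hn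
    cases n with
    | zero => simp at hn
    | succ n =>
      rw [Finset.sum_range_succ']
      simp only [List.getD_cons_succ, List.getD_cons_zero, List.sum_cons]
      rw [ih (by simpa using hn)]
      omega

lemma ofDigits_eq_sum (p : ℕ) (L : List ℕ) :
    Nat.ofDigits p L = ∑ j ∈ Finset.range L.length, L.getD j 0 * p ^ j := by
  induction L with
  | nil => simp
  | cons d t ih =>
    rw [Nat.ofDigits_cons, ih, List.length_cons, Finset.sum_range_succ']
    simp only [List.getD_cons_succ, List.getD_cons_zero, pow_zero, mul_one]
    rw [add_comm]
    congr 1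
    rw [Finset.mul_sum]
    apply Finset.sum_congr rfl
    intro j _
    ring

lemma modeq_sum {n : ℕ} {s : Finset ℕ} {f g : ℕ → ℕ} (h : ∀ i ∈ s, f i ≡ g i [MOD n]) :
    (∑ i ∈ s, f i) ≡ (∑ i ∈ s, g i) [MOD n] := by
  classical
  induction s using Finset.induction_on with
  | empty => rfl
  | @insert a s' hx ih =>
    rw [Finset.sum_insert hx, Finset.sum_insert hx]
    exact (h a (Finset.mem_insert_self a s')).add (ih fun i hi => h i (Finset.mem_insert_of_mem hi))

lemma digits_spec (p : ℕ) (hp : 2 ≤ p) :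
    ∀ (r : ℕ) (a : ℕ → ℕ), (∀ i, i < r → a i < p) →
    (∀ i, i < r → (Nat.digits p (∑ i ∈ Finset.range r, a i * p ^ i)).getD i 0 = a i) ∧
    (Nat.digits p (∑ i ∈ Finset.range r, a i * p ^ i)).sum = ∑ i ∈ Finset.range r, a i := by
  intro r
  induction r with
  | zero => intro a _; simp
  | succ r ih =>
    intro a ha
    have hN : ∑ i ∈ Finset.range (r+1), a i * p ^ i
        = a 0 + p * ∑ i ∈ Finset.range r, a (i+1) * p ^ i := by
      rw [Finset.sum_range_succ', Finset.mul_sum]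
      simp only [pow_zero, mul_one]
      rw [add_comm]
      congr 1
      apply Finset.sum_congr rfl
      intro j _
      ring
    set N := ∑ i ∈ Finset.range (r+1), a i * p ^ i with hNdef
    obtain ⟨ih1, ih2⟩ := ih (fun i => a (i+1)) (fun i hi => ha (i+1) (by omega))
    by_cases h0 : N = 0
    · have hz : ∀ i, i < r + 1 → a i = 0 := by
        intro i hi
        have h1 : a i * p ^ i ≤ N := Finset.single_le_sum (f := fun i => a i * p ^ i)
          (fun _ _ => Nat.zero_le _) (Finset.mem_range.mpr hi)
        have h2 : a i * p ^ i = 0 := by omega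
        rcases Nat.mul_eq_zero.mp h2 with h | h
        · exact h
        · exact absurd h (by positivity)
      constructor
      · intro i hi; rw [h0]; simp [hz i hi]
      · rw [h0]
        simp only [Nat.digits_zero, List.sum_nil]
        rw [Finset.sum_eq_zero fun i hi => hz i (Finset.mem_range.mp hi)]
    · have hd : Nat.digits p N = N % p :: Nat.digits p (N / p) :=
        Nat.digits_def' (by omega) (Nat.pos_of_ne_zero h0)
      have h1 : N % p = a 0 := by
        rw [hN, Nat.add_mul_mod_self_left]
        exact Nat.mod_eq_of_lt (ha 0 (by omega))
      have h2 : N / p = ∑ i ∈ Finset.range r, a (i+1) * p ^ i := by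
        rw [hN, Nat.add_mul_div_left _ _ (by omega : 0 < p),
          Nat.div_eq_of_lt (ha 0 (by omega))]
        omega
      constructor
      · intro i hi
        cases i with
        | zero => rw [hd]; simpa using h1
        | succ i =>
          rw [hd]
          simp only [List.getD_cons_succ]
          rw [h2]
          exact ih1 i (by omega)
      · rw [hd]
        simp only [List.sum_cons]
        rw [h1, h2, ih2, Finset.sum_range_succ']
        omega

lemma sum_lt_pow (p : ℕ) (hp : 2 ≤ p) :
    ∀ (r : ℕ) (a : ℕ → ℕ), (∀ i, i < r → a i < p) →
    ∑ i ∈ Finset.range r, a i * p ^ i < p ^ r := by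
  intro r
  induction r with
  | zero => intro a _; simp
  | succ r ih =>
    intro a ha
    rw [Finset.sum_range_succ]
    have h1 := ih a (fun i hi => ha i (by omega))
    have h2 : a r * p ^ r ≤ (p - 1) * p ^ r :=
      Nat.mul_le_mul_right _ (by have := ha r (by omega); omega)
    have h3 : p ^ r + (p - 1) * p ^ r = p ^ (r + 1) := by
      have h4 : p ^ r + (p - 1) * p ^ r = (1 + (p - 1)) * p ^ r := by ring
      have h5 : 1 + (p - 1) = p := by omega
      rw [h4, h5, pow_succ, mul_comm]
    omega

/-- Key lemma: minimality and uniqueness of digit representation mod p^r - 1. -/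
lemma key (p r : ℕ) (hp : 2 ≤ p) (hr : 2 ≤ r) :
    ∀ (S : ℕ) (a : ℕ → ℕ), (∑ i ∈ Finset.range r, a i) = S →
    ∀ m : ℕ, m < p ^ r →
    (∑ i ∈ Finset.range r, a i * p ^ i) ≡ m [MOD p ^ r - 1] →
    ((∑ i ∈ Finset.range r, a i * p ^ i) ≠ 0 ∨ m ≠ p ^ r - 1) →
    (Nat.digits p m).sum ≤ S ∧
      (S = (Nat.digits p m).sum → ∀ i, i < r → a i = (Nat.digits p m).getD i 0) := by
  intro S
  induction S using Nat.strong_induction_on with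
  | _ S IH =>
  intro a haS m hm hcong hside
  have hq1 : 2 ≤ p ^ r := by
    calc 2 ≤ p := hp
    _ ≤ p ^ r := Nat.le_self_pow (by omega) p
  by_cases hsmall : ∀ i, i < r → a i < p
  · -- all digits small
    set N := ∑ i ∈ Finset.range r, a i * p ^ i with hNdef
    have hNlt : N < p ^ r := sum_lt_pow p hp r a hsmall
    obtain ⟨hg, hs⟩ := digits_spec p hp r a hsmall
    have hmods : N % (p ^ r - 1) = m % (p ^ r - 1) := hcong
    by_cases hNm : N = m
    · rw [← hNm]
      refine ⟨le_of_eq (by rw [hs, haS]), fun _ i hi => (hg i hi).symm⟩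
    · have hN' : N < p ^ r - 1 → N % (p ^ r - 1) = N := fun h => Nat.mod_eq_of_lt h
      have hm' : m < p ^ r - 1 → m % (p ^ r - 1) = m := fun h => Nat.mod_eq_of_lt h
      have hcases : (N = p ^ r - 1 ∧ m = 0) ∨ (N = 0 ∧ m = p ^ r - 1) := by
        rcases Nat.lt_or_ge N (p ^ r - 1) with h1 | h1 <;>
          rcases Nat.lt_or_ge m (p ^ r - 1) with h2 | h2
        · rw [hN' h1, hm' h2] at hmods; exact absurd hmods hNm
        · have hmeq : m = p ^ r - 1 := by omega
          rw [hN' h1, hmeq, Nat.mod_self] at hmods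
          right; exact ⟨hmods, hmeq⟩
        · have hNeq : N = p ^ r - 1 := by omega
          rw [hm' h2, hNeq, Nat.mod_self] at hmods
          left; exact ⟨hNeq, hmods.symm⟩
        · exact absurd (by omega : N = m) hNm
      rcases hcases with ⟨hN0, hm0⟩ | ⟨hN0, hm0⟩
      · rw [hm0]
        simp only [Nat.digits_zero, List.sum_nil]
        refine ⟨Nat.zero_le _, fun hS0 => ?_⟩
        exfalso
        have hallz : ∀ i ∈ Finset.range r, a i = 0 := by
          intro i hi
          have := Finset.single_le_sum (f := a) (fun _ _ => Nat.zero_le _) hi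
          omega
        have : N = 0 := Finset.sum_eq_zero fun i hi => by rw [hallz i hi, zero_mul]
        omega
      · exact absurd hN0 (by tauto)
  · -- some digit is ≥ p : smooth it
    push_neg at hsmall
    obtain ⟨i, hir, hpi⟩ := hsmall
    set i1 := (i + 1) % r with hi1def
    have hi1r : i1 < r := Nat.mod_lt _ (by omega)
    have hne : i ≠ i1 := by
      rcases Nat.lt_or_ge (i + 1) r with h | h
      · rw [hi1def, Nat.mod_eq_of_lt h]; omega
      · have h' : i + 1 = r := by omega
        rw [hi1def, h', Nat.mod_self]; omega
    set b : ℕ → ℕ := fun j => if j = i then a i - p else if j = i1 then a j + 1 else a j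
      with hbdef
    have hbi : b i = a i - p := by simp [hbdef]
    have hbi1 : b i1 = a i1 + 1 := by simp [hbdef, Ne.symm hne]
    have hmain : ∀ c : ℕ → ℕ,
        ∑ j ∈ Finset.range r, b j * c j + p * c i
          = ∑ j ∈ Finset.range r, a j * c j + c i1 := by
      intro c
      have hmi1 : i1 ∈ Finset.range r := Finset.mem_range.mpr hi1r
      have hmi : i ∈ (Finset.range r).erase i1 :=
        Finset.mem_erase.mpr ⟨hne, Finset.mem_range.mpr hir⟩
      rw [← Finset.sum_erase_add _ (fun j => b j * c j) hmi1,
        ← Finset.sum_erase_add _ (fun j => b j * c j) hmi,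
        ← Finset.sum_erase_add _ (fun j => a j * c j) hmi1,
        ← Finset.sum_erase_add _ (fun j => a j * c j) hmi]
      have hcongr : ∑ j ∈ ((Finset.range r).erase i1).erase i, b j * c j
          = ∑ j ∈ ((Finset.range r).erase i1).erase i, a j * c j := by
        apply Finset.sum_congr rfl
        intro j hj
        have hj1 : j ≠ i := (Finset.mem_erase.mp hj).1
        have hj2 : j ≠ i1 := (Finset.mem_erase.mp (Finset.mem_erase.mp hj).2).1
        simp [hbdef, hj1, hj2]
      rw [hcongr, hbi, hbi1, Nat.sub_mul, add_mul, one_mul]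
      have : p * c i ≤ a i * c i := Nat.mul_le_mul_right _ hpi
      omega
    have hsum_b : ∑ j ∈ Finset.range r, b j = S + 1 - p := by
      have := hmain (fun _ => 1)
      simp only [mul_one] at this
      omega
    have hSp : p ≤ S := by
      rw [← haS]
      calc p ≤ a i := hpi
      _ ≤ _ := Finset.single_le_sum (f := a) (fun _ _ => Nat.zero_le _)
          (Finset.mem_range.mpr hir)
    have hS' : S + 1 - p < S := by omega
    have hNb := hmain (fun j => p ^ j)
    have hkey : (∑ j ∈ Finset.range r, b j * p ^ j) ≡ m [MOD p ^ r - 1] ∧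
        (∑ j ∈ Finset.range r, b j * p ^ j) ≠ 0 := by
      rcases Nat.lt_or_ge (i + 1) r with h | h
      · have hi1eq : i1 = i + 1 := by rw [hi1def, Nat.mod_eq_of_lt h]
        have hNeq : ∑ j ∈ Finset.range r, b j * p ^ j
            = ∑ j ∈ Finset.range r, a j * p ^ j := by
          rw [hi1eq] at hNb
          rw [pow_succ] at hNb
          have hcomm : p * p ^ i = p ^ i * p := mul_comm _ _
          omega
        constructor
        · rw [hNeq]; exact hcong
        · rw [hNeq]
          intro h0
          have h1 : a i * p ^ i ≤ 0 := h0 ▸ Finset.single_le_sum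
            (f := fun j => a j * p ^ j) (fun _ _ => Nat.zero_le _) (Finset.mem_range.mpr hir)
          have h2 : 0 < p ^ i := by positivity
          nlinarith
      · have hieq : i + 1 = r := by omega
        have hi1eq : i1 = 0 := by rw [hi1def, hieq, Nat.mod_self]
        have hpr : p * p ^ i = p ^ r := by rw [← pow_succ', hieq]
        have hNge : p ^ r ≤ ∑ j ∈ Finset.range r, a j * p ^ j := by
          calc p ^ r = p * p ^ i := hpr.symm
          _ ≤ a i * p ^ i := Nat.mul_le_mul_right _ hpi
          _ ≤ _ := Finset.single_le_sum (f := fun j => a j * p ^ j)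
              (fun _ _ => Nat.zero_le _) (Finset.mem_range.mpr hir)
        have hNeq : ∑ j ∈ Finset.range r, b j * p ^ j + (p ^ r - 1)
            = ∑ j ∈ Finset.range r, a j * p ^ j := by
          rw [hi1eq] at hNb
          simp only [pow_zero] at hNb
          omega
        constructor
        · have hstep : (∑ j ∈ Finset.range r, b j * p ^ j) ≡
              (∑ j ∈ Finset.range r, b j * p ^ j + (p ^ r - 1)) [MOD p ^ r - 1] :=
            (Nat.modEq_iff_dvd' (Nat.le_add_right _ _)).mpr (by simp)
          rw [hNeq] at hstep
          exact hstep.trans hcong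
        · omega
    obtain ⟨hbcong, hbne⟩ := hkey
    obtain ⟨hle, _⟩ := IH (S + 1 - p) hS' b hsum_b m hm hbcong (Or.inl hbne)
    exact ⟨by omega, fun hSeq => absurd hSeq (by omega)⟩


lemma getD_eq_zero_of_sum_eq_zero {L : List ℕ} (h : L.sum = 0) (j : ℕ) : L.getD j 0 = 0 := by
  have hz : ∀ x ∈ L, x = 0 := by
    intro x hx
    induction L with
    | nil => simp at hx
    | cons d t ih =>
      simp only [List.sum_cons] at h
      rcases List.mem_cons.mp hx with h1 | h1
      · omega
      · exact ih (by omega) h1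
  rcases Nat.lt_or_ge j L.length with hj | hj
  · rw [List.getD_eq_getElem _ _ hj]
    exact hz _ (List.getElem_mem hj)
  · exact List.getD_eq_default _ _ hj

theorem digitSum_eq_iff_blocked_digits (p r m m' : ℕ) (hp : p.Prime) (hr : 1 < r)
    (hm : m ≤ p ^ r - 1) (hmod : m' ≡ m [MOD p ^ r - 1]) :
    (Nat.digits p m').sum = (Nat.digits p m).sum ↔
      ∀ i < r,
        (∑ j ∈ Finset.range ((Nat.digits p m').length),
            if j % r = i then (Nat.digits p m').getD j 0 else 0)
          = (Nat.digits p m).getD i 0 := by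
  have hp2 : 2 ≤ p := hp.two_le
  have hq1 : 1 ≤ p ^ r := Nat.one_le_pow _ _ (by omega)
  have hmlt : m < p ^ r := by omega
  set D := Nat.digits p m' with hD
  have hlenm : (Nat.digits p m).length ≤ r := by
    by_cases h : m = 0
    · simp [h]
    · rw [Nat.digits_len p m hp.one_lt h]
      have := Nat.log_lt_of_lt_pow h hmlt
      omega
  have hfm : ∑ i ∈ Finset.range r, (Nat.digits p m).getD i 0 = (Nat.digits p m).sum :=
    sum_getD_range _ hlenm
  set a : ℕ → ℕ := fun i =>
    ∑ j ∈ Finset.range D.length, if j % r = i then D.getD j 0 else 0 with hadef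
  have hA : ∑ i ∈ Finset.range r, a i = D.sum := by
    rw [hadef]
    rw [Finset.sum_comm]
    have : ∀ j ∈ Finset.range D.length,
        (∑ i ∈ Finset.range r, if j % r = i then D.getD j 0 else 0) = D.getD j 0 := by
      intro j _
      rw [Finset.sum_ite_eq (Finset.range r) (j % r) (fun _ => D.getD j 0),
        if_pos (Finset.mem_range.mpr (Nat.mod_lt _ (by omega)))]
    rw [Finset.sum_congr rfl this, sum_getD_range _ le_rfl]
  have hB : ∑ i ∈ Finset.range r, a i * p ^ i
      = ∑ j ∈ Finset.range D.length, D.getD j 0 * p ^ (j % r) := by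
    calc ∑ i ∈ Finset.range r, a i * p ^ i
        = ∑ i ∈ Finset.range r, ∑ j ∈ Finset.range D.length,
            (if j % r = i then D.getD j 0 * p ^ i else 0) := by
          apply Finset.sum_congr rfl
          intro i _
          rw [hadef]
          rw [Finset.sum_mul]
          apply Finset.sum_congr rfl
          intro j _
          rw [ite_mul, zero_mul]
      _ = ∑ j ∈ Finset.range D.length, ∑ i ∈ Finset.range r,
            (if j % r = i then D.getD j 0 * p ^ i else 0) := Finset.sum_comm
      _ = ∑ j ∈ Finset.range D.length, D.getD j 0 * p ^ (j % r) := by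
          apply Finset.sum_congr rfl
          intro j _
          rw [Finset.sum_ite_eq (Finset.range r) (j % r) (fun i => D.getD j 0 * p ^ i),
            if_pos (Finset.mem_range.mpr (Nat.mod_lt _ (by omega)))]
  have hone : (1 : ℕ) ≡ p ^ r [MOD p ^ r - 1] :=
    (Nat.modEq_iff_dvd' hq1).mpr (by simp)
  have hC : (∑ j ∈ Finset.range D.length, D.getD j 0 * p ^ (j % r)) ≡ m' [MOD p ^ r - 1] := by
    have h1 : Nat.ofDigits p D = m' := Nat.ofDigits_digits p m'
    rw [ofDigits_eq_sum] at h1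
    rw [← h1]
    apply modeq_sum
    intro j _
    apply Nat.ModEq.mul_left
    calc p ^ (j % r) = 1 * p ^ (j % r) := (one_mul _).symm
      _ ≡ (p ^ r) ^ (j / r) * p ^ (j % r) [MOD p ^ r - 1] := by
          apply Nat.ModEq.mul_right
          have := hone.pow (j / r)
          simpa using this
      _ = p ^ (r * (j / r)) * p ^ (j % r) := by rw [pow_mul]
      _ = p ^ (r * (j / r) + j % r) := (pow_add _ _ _).symm
      _ = p ^ j := by rw [Nat.div_add_mod]
  have hcong : (∑ i ∈ Finset.range r, a i * p ^ i) ≡ m [MOD p ^ r - 1] := by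
    rw [hB]; exact hC.trans hmod
  constructor
  · intro hsum
    by_cases h0 : m' = 0
    · subst h0
      have hz : (Nat.digits p m).sum = 0 := by
        rw [← hsum, hD]
        simp
      intro i hi
      have h3 : (Nat.digits p m).getD i 0 = 0 := getD_eq_zero_of_sum_eq_zero hz i
      rw [h3]
      have hlen : D.length = 0 := by rw [hD]; simp
      rw [hlen]
      simp
    · have hne : (∑ i ∈ Finset.range r, a i * p ^ i) ≠ 0 := by
        intro hN0
        have hz : ∀ i ∈ Finset.range r, a i = 0 := by
          intro i hi
          have h1 : a i * p ^ i ≤ 0 := hN0 ▸ Finset.single_le_sum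
            (f := fun i => a i * p ^ i) (fun _ _ => Nat.zero_le _) hi
          have h2 : 0 < p ^ i := by positivity
          nlinarith
        have hDs : D.sum = 0 := by
          rw [← hA, Finset.sum_eq_zero hz]
        apply h0
        have h1 : Nat.ofDigits p D = m' := Nat.ofDigits_digits p m'
        rw [ofDigits_eq_sum] at h1
        rw [← h1]
        apply Finset.sum_eq_zero
        intro j hj
        rw [getD_eq_zero_of_sum_eq_zero hDs j, zero_mul]
      have hkey := key p r hp2 hr (∑ i ∈ Finset.range r, a i) a rfl m hmlt hcong (Or.inl hne)
      have hSeq : ∑ i ∈ Finset.range r, a i = (Nat.digits p m).sum := hA.trans hsum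
      exact fun i hi => hkey.2 hSeq i hi
  · intro h
    have h1 : ∑ i ∈ Finset.range r, a i = ∑ i ∈ Finset.range r, (Nat.digits p m).getD i 0 :=
      Finset.sum_congr rfl fun i hi => h i (Finset.mem_range.mp hi)
    rw [hA] at h1
    exact h1.trans hfm
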